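/- If the midpoint of p_i and p_j lies at height y (i.e., (p_i.2 + p_j.2)/2 = y), then the backward pair distance B(y) = ⨅ x, max(dist((x,y), p_i), dist((x,y), p_j)) equals dist(p_i, p_j)/2, attained at x equal to the x-coordinate of the midpoint. -/

import Mathlib

noncomputable def pt (x y : ℝ) : EuclideanSpace ℝ (Fin 2) := WithLp.toLp 2 ![x, y]

lemma pt_dist (x y : ℝ) (p : EuclideanSpace ℝ (Fin 2)) :
    dist (pt x y) p = Real.sqrt ((x - p 0) ^ 2 + (y - p 1) ^ 2) := by
  rw [EuclideanSpace.dist_eq, Fin.sum_univ_two]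
  simp [pt, Real.dist_eq, sq_abs]

lemma mid_dist (pi pj : EuclideanSpace ℝ (Fin 2)) (y : ℝ)
    (h : (pi 1 + pj 1) / 2 = y) :
    dist (pt ((pi 0 + pj 0) / 2) y) pi = dist pi pj / 2 := by
  rw [pt_dist, EuclideanSpace.dist_eq, Fin.sum_univ_two, ← h]
  rw [show ((pi 0 + pj 0) / 2 - pi 0) ^ 2 + ((pi 1 + pj 1) / 2 - pi 1) ^ 2
      = ((pi 0 - pj 0) ^ 2 + (pi 1 - pj 1) ^ 2) / 2 ^ 2 by ring]
  rw [Real.sqrt_div (by positivity), Real.sqrt_sq (by norm_num)]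
  simp [Real.dist_eq, sq_abs]

theorem backward_pair_at_midheight (pi pj : EuclideanSpace ℝ (Fin 2)) (y : ℝ)
    (h : (pi 1 + pj 1) / 2 = y) :
    (⨅ x : ℝ, max (dist (pt x y) pi) (dist (pt x y) pj)) = dist pi pj / 2 ∧
    max (dist (pt ((pi 0 + pj 0) / 2) y) pi) (dist (pt ((pi 0 + pj 0) / 2) y) pj) =
      dist pi pj / 2 := by
  have h2 : (pj 1 + pi 1) / 2 = y := by linarith
  have hi := mid_dist pi pj y h
  have hj := mid_dist pj pi y h2
  rw [dist_comm pj pi, add_comm (pj 0)] at hj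
  have hmax : max (dist (pt ((pi 0 + pj 0) / 2) y) pi)
      (dist (pt ((pi 0 + pj 0) / 2) y) pj) = dist pi pj / 2 := by
    rw [hi, hj, max_self]
  refine ⟨le_antisymm ?_ ?_, hmax⟩
  · exact hmax ▸ ciInf_le ⟨0, fun r ⟨x, hx⟩ => hx ▸ le_max_iff.2 (Or.inl dist_nonneg)⟩ _
  · refine le_ciInf fun x => ?_
    have ht := dist_triangle pi (pt x y) pj
    have h1 : dist pi (pt x y) ≤ max (dist (pt x y) pi) (dist (pt x y) pj) := by
      rw [dist_comm]; exact le_max_left _ _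
    have h2 : dist (pt x y) pj ≤ max (dist (pt x y) pi) (dist (pt x y) pj) :=
      le_max_right _ _
    linarith
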